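/- Fix β ∈ (0,1) and let c_j = β(1−β)(2−β)⋯(j−1−β)/j! for j ≥ 1. Then there exist υ > 0 and a constant C (depending only on β) such that for every n ≥ 1: |Σ_{j=1}^{n} j·c_j·e^{ijθ}| ≤ C·|θ|^{β−1} for all θ with 0.01·n^{−1} < |θ| < υ, and |Σ_{j=1}^{n} j·c_j·e^{ijθ}| ≤ C·n^{1−β} for all θ with |θ| ≤ 0.01·n^{−1}. (This bounds the θ-derivative of A_n(e^{iθ}) = M·n^{−β} + Σ_{j=1}^n c_j(1 − e^{ijθ}), which equals −i·Σ_{j=1}^n j c_j e^{ijθ}.) -/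

import Mathlib

open Finset

/-- Taylor coefficients of `(1−z)^{β}`: `c_j = β(1−β)(2−β)⋯(j−1−β)/j!`,
so that `(1−z)^β = 1 − Σ_{j≥1} c_j z^j`. -/
noncomputable def ccoef (β : ℝ) (j : ℕ) : ℝ :=
  (β * ∏ i ∈ Finset.Ico 1 j, ((i : ℝ) - β)) / (Nat.factorial j)

section Aux

/-- AM–GM consequence. -/
private lemma An_amgm (β x : ℝ) (hb0 : 0 ≤ β) (hb1 : β ≤ 1) (hx : 0 ≤ x) :
    x ^ (1-β) * (x+1) ^ β ≤ x + β := by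
  have := Real.geom_mean_le_arith_mean2_weighted (by linarith : (0:ℝ) ≤ 1-β) hb0 hx
    (by linarith : (0:ℝ) ≤ x+1) (by ring)
  linarith [this]

private lemma An_step_ineq (β : ℝ) (hb0 : 0 < β) (hb1 : β < 1) (x : ℝ) (hx : 0 ≤ x) :
    (1-β) * (x+1) ^ (-β) ≤ (x+1) ^ (1-β) - x ^ (1-β) := by
  have h1 : (0:ℝ) < x + 1 := by linarith
  have hsplit : (x+1) ^ (1-β) = (x+1) * (x+1) ^ (-β) := by
    nth_rewrite 2 [← Real.rpow_one (x+1)]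
    rw [← Real.rpow_add h1]; ring_nf
  have hmul : x ^ (1-β) * (x+1) ^ β ≤ x + β := An_amgm β x hb0.le hb1.le hx
  have hpos : (0:ℝ) < (x+1) ^ β := Real.rpow_pos_of_pos h1 β
  have hinv : (x+1) ^ (-β) * (x+1) ^ β = 1 := by
    rw [← Real.rpow_add h1]; norm_num
  rw [hsplit]
  have key : ((1-β) * (x+1)^(-β) + x^(1-β)) * (x+1)^β ≤ ((x+1) * (x+1)^(-β)) * (x+1)^β := by
    have lhs : ((1-β) * (x+1)^(-β) + x^(1-β)) * (x+1)^β
        = (1-β) + x^(1-β) * (x+1)^β := by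
      rw [add_mul, mul_assoc, hinv, mul_one]
    have rhs : ((x+1) * (x+1)^(-β)) * (x+1)^β = x + 1 := by
      rw [mul_assoc, hinv]; ring
    rw [lhs, rhs]; linarith
  have := (mul_le_mul_iff_left₀ hpos).mp key
  linarith

private lemma An_sum_rpow_le (β : ℝ) (hb0 : 0 < β) (hb1 : β < 1) (J : ℕ) :
    ∑ j ∈ Icc 1 J, (j:ℝ) ^ (-β) ≤ (J:ℝ) ^ (1-β) / (1-β) := by
  have h1b : (0:ℝ) < 1 - β := by linarith
  induction J with
  | zero => simp [Real.zero_rpow (by linarith : (1:ℝ)-β ≠ 0)]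
  | succ J ih =>
    rw [Finset.sum_Icc_succ_top (Nat.one_le_iff_ne_zero.mpr (Nat.succ_ne_zero J))]
    have key := An_step_ineq β hb0 hb1 (J:ℝ) (Nat.cast_nonneg J)
    have hcast : ((J+1 : ℕ):ℝ) = (J:ℝ) + 1 := by push_cast; ring
    rw [hcast, le_div_iff₀ h1b]
    have ih' := (le_div_iff₀ h1b).mp ih
    nlinarith [key, ih']

/-- The product `∏_{i=1}^{j-1} (i-β)/i`. -/
private noncomputable def Pprod (β : ℝ) (j : ℕ) : ℝ :=
  ∏ i ∈ Finset.Ico 1 j, (((i:ℝ) - β)/ i)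

private lemma An_jc_eq (β : ℝ) (j : ℕ) (hj : 1 ≤ j) :
    (j:ℝ) * ccoef β j = β * Pprod β j := by
  obtain ⟨m, rfl⟩ := Nat.exists_eq_add_of_le hj
  have hfac : (∏ i ∈ Ico 1 (1+m), (i:ℝ)) = (Nat.factorial m : ℝ) := by
    rw [add_comm, ← Nat.cast_prod, Finset.prod_Ico_id_eq_factorial m]
  have hfacpos : (0:ℝ) < ∏ i ∈ Ico 1 (1+m), (i:ℝ) := by
    rw [hfac]; positivity
  unfold ccoef Pprod
  rw [Finset.prod_div_distrib, hfac]
  have : (Nat.factorial (1+m) : ℝ) = ((1+m : ℕ):ℝ) * (Nat.factorial m : ℝ) := by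
    rw [add_comm, Nat.factorial_succ]; push_cast; ring
  rw [this]
  have hm : (Nat.factorial m : ℝ) ≠ 0 := by positivity
  have hjm : ((1+m : ℕ) : ℝ) ≠ 0 := by positivity
  field_simp

private lemma An_Pprod_nonneg (β : ℝ) (hb1 : β ≤ 1) (j : ℕ) : 0 ≤ Pprod β j := by
  apply Finset.prod_nonneg
  intro i hi
  have : 1 ≤ i := (Finset.mem_Ico.mp hi).1
  have : (1:ℝ) ≤ i := by exact_mod_cast this
  apply div_nonneg (by linarith) (by linarith)

private lemma An_ratio_step (β : ℝ) (hb0 : 0 < β) (hb1 : β < 1) (x : ℝ) (hx : 1 ≤ x) :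
    x ^ (-β) * ((x-β)/x) ≤ (x+1) ^ (-β) := by
  have hx0 : (0:ℝ) < x := by linarith
  have hx1 : (0:ℝ) < x + 1 := by linarith
  have hA : (0:ℝ) < x ^ β := Real.rpow_pos_of_pos hx0 β
  have hB : (0:ℝ) < (x+1) ^ β := Real.rpow_pos_of_pos hx1 β
  have hAi : x ^ (-β) * x ^ β = 1 := by rw [← Real.rpow_add hx0]; norm_num
  have hBi : (x+1) ^ (-β) * (x+1) ^ β = 1 := by rw [← Real.rpow_add hx1]; norm_num
  have hsplit : x ^ ((1:ℝ)-β) = x * x ^ (-β) := by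
    nth_rewrite 2 [← Real.rpow_one x]
    rw [← Real.rpow_add hx0]; ring_nf
  have amg : x ^ ((1:ℝ)-β) * (x+1) ^ β ≤ x + β := by
    have := Real.geom_mean_le_arith_mean2_weighted (by linarith : (0:ℝ) ≤ 1-β) hb0.le
      hx0.le (by linarith : (0:ℝ) ≤ x+1) (by ring)
    linarith [this]
  rw [hsplit] at amg
  rw [← mul_le_mul_iff_left₀ hB, hBi]
  set t := x ^ (-β) * (x+1) ^ β with ht
  have ht0 : 0 < t := mul_pos (Real.rpow_pos_of_pos hx0 _) hB
  have hxt : x * t ≤ x + β := by rw [ht]; nlinarith [amg]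
  have goal' : x ^ (-β) * ((x-β)/x) * (x+1)^β = (x-β)/x * t := by rw [ht]; ring
  rw [goal']
  rw [div_mul_eq_mul_div, div_le_one hx0]
  nlinarith [mul_le_mul_of_nonneg_left hxt (by linarith : (0:ℝ) ≤ x - β)]

private lemma An_Pprod_le (β : ℝ) (hb0 : 0 < β) (hb1 : β < 1) :
    ∀ j : ℕ, 1 ≤ j → Pprod β j ≤ (j:ℝ) ^ (-β) := by
  intro j hj
  induction j, hj using Nat.le_induction with
  | base => simp [Pprod, Real.one_rpow]
  | succ j hj ih =>
    have hstep : Pprod β (j+1) = Pprod β j * (((j:ℝ)-β)/j) := by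
      unfold Pprod
      rw [Finset.prod_Ico_succ_top hj]
    have hx : (1:ℝ) ≤ (j:ℝ) := by exact_mod_cast hj
    have hf0 : 0 ≤ ((j:ℝ)-β)/j := div_nonneg (by linarith) (by linarith)
    have h1 : Pprod β j * (((j:ℝ)-β)/j) ≤ (j:ℝ)^(-β) * (((j:ℝ)-β)/j) :=
      mul_le_mul_of_nonneg_right ih hf0
    have h2 := An_ratio_step β hb0 hb1 (j:ℝ) hx
    rw [hstep]
    push_cast
    linarith

private lemma An_Pprod_succ_le (β : ℝ) (hb0 : 0 < β) (hb1 : β < 1) (j : ℕ) (hj : 1 ≤ j) :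
    Pprod β (j+1) ≤ Pprod β j := by
  have hstep : Pprod β (j+1) = Pprod β j * (((j:ℝ)-β)/j) := by
    unfold Pprod
    rw [Finset.prod_Ico_succ_top hj]
  have hx : (1:ℝ) ≤ (j:ℝ) := by exact_mod_cast hj
  have hf1 : ((j:ℝ)-β)/j ≤ 1 := by
    rw [div_le_one (by linarith)]; linarith
  have hf0 : 0 ≤ ((j:ℝ)-β)/j := div_nonneg (by linarith) (by linarith)
  have := An_Pprod_nonneg β hb1.le j
  rw [hstep]
  nlinarith

private lemma An_abel_bound (a : ℕ → ℝ) (z : ℂ) (M : ℝ) (J : ℕ) (hM : 0 ≤ M)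
    (ha0 : ∀ j, 0 ≤ a j)
    (hmono : ∀ j, J+1 ≤ j → a (j+1) ≤ a j)
    (hS : ∀ k, ‖∑ j ∈ Ioc J k, z^j‖ ≤ M) :
    ∀ n, ‖∑ j ∈ Ioc J n, (a j : ℂ) * z^j‖ ≤ M * a (J+1) := by
  have helper : ∀ n, J+1 ≤ n →
      ‖(∑ j ∈ Ioc J n, (a j : ℂ) * z^j) - (a n : ℂ) * (∑ j ∈ Ioc J n, z^j)‖
        ≤ M * (a (J+1) - a n) := by
    intro n hn
    induction n, hn using Nat.le_induction with
    | base =>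
      have : Ioc J (J+1) = {J+1} := by
        ext x; simp only [Finset.mem_Ioc, Finset.mem_singleton]; omega
      simp [this]
    | succ n hn ih =>
      have hJn : J ≤ n := le_trans (Nat.le_succ J) hn
      rw [Finset.sum_Ioc_succ_top hJn, Finset.sum_Ioc_succ_top hJn]
      have expand :
          ((∑ j ∈ Ioc J n, (a j : ℂ) * z^j) + (a (n+1) : ℂ) * z^(n+1))
            - (a (n+1) : ℂ) * ((∑ j ∈ Ioc J n, z^j) + z^(n+1))
          = ((∑ j ∈ Ioc J n, (a j : ℂ) * z^j) - (a n : ℂ) * (∑ j ∈ Ioc J n, z^j))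
            + ((a n : ℂ) - (a (n+1) : ℂ)) * (∑ j ∈ Ioc J n, z^j) := by ring
      rw [expand]
      have h2 : ‖((a n : ℂ) - (a (n+1) : ℂ)) * (∑ j ∈ Ioc J n, z^j)‖
          ≤ (a n - a (n+1)) * M := by
        rw [norm_mul]
        have : ‖((a n : ℂ) - (a (n+1) : ℂ))‖ = a n - a (n+1) := by
          rw [← Complex.ofReal_sub, Complex.norm_real, Real.norm_eq_abs,
            abs_of_nonneg (by linarith [hmono n hn])]
        rw [this]
        exact mul_le_mul_of_nonneg_left (hS n) (by linarith [hmono n hn])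
      calc ‖_ + _‖ ≤ _ := norm_add_le _ _
        _ ≤ M * (a (J+1) - a n) + (a n - a (n+1)) * M := add_le_add ih h2
        _ = M * (a (J+1) - a (n+1)) := by ring
  intro n
  rcases le_or_gt n J with h | h
  · have : Ioc J n = ∅ := by
      rw [Finset.Ioc_eq_empty_iff]; omega
    rw [this]
    simp
    exact mul_nonneg hM (ha0 _)
  · have hn : J + 1 ≤ n := h
    have h1 := helper n hn
    have h2 : ‖(a n : ℂ) * (∑ j ∈ Ioc J n, z^j)‖ ≤ a n * M := by
      rw [norm_mul, Complex.norm_real, Real.norm_eq_abs, abs_of_nonneg (ha0 n)]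
      exact mul_le_mul_of_nonneg_left (hS n) (ha0 n)
    calc ‖∑ j ∈ Ioc J n, (a j : ℂ) * z^j‖
        = ‖((∑ j ∈ Ioc J n, (a j : ℂ) * z^j) - (a n : ℂ) * (∑ j ∈ Ioc J n, z^j))
            + (a n : ℂ) * (∑ j ∈ Ioc J n, z^j)‖ := by rw [sub_add_cancel]
      _ ≤ _ := norm_add_le _ _
      _ ≤ M * (a (J+1) - a n) + a n * M := add_le_add h1 h2
      _ = M * a (J+1) := by ring

private lemma An_sin_lb (θ : ℝ) (h1 : |θ| ≤ 1) : |θ|/2 ≤ |Real.sin θ| := by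
  rcases eq_or_ne θ 0 with rfl | h0
  · simp
  · have habs : |Real.sin θ| = |Real.sin (|θ|)| := by
      rcases abs_choice θ with h | h
      · rw [h]
      · rw [h, Real.sin_neg, abs_neg]
    rw [habs]
    have hx0 : 0 < |θ| := abs_pos.mpr h0
    have := Real.sin_gt_sub_cube hx0
    have hcube : |θ|^3 ≤ |θ| := by
      nlinarith [abs_nonneg θ, pow_le_one₀ (abs_nonneg θ) h1 (n:=2)]
    rw [abs_of_pos (by nlinarith : 0 < Real.sin (|θ|))]
    nlinarith

private lemma An_exp_norm_one (θ : ℝ) : ‖Complex.exp (Complex.I * θ)‖ = 1 := by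
  rw [Complex.norm_exp]
  simp [Complex.mul_re]

private lemma An_z_sub_one_lb (θ : ℝ) (h1 : |θ| ≤ 1) :
    |θ|/2 ≤ ‖Complex.exp (Complex.I * θ) - 1‖ := by
  have him : (Complex.exp (Complex.I * θ) - 1).im = Real.sin θ := by
    rw [mul_comm, Complex.exp_mul_I]
    simp [← Complex.ofReal_cos, ← Complex.ofReal_sin]
  calc |θ|/2 ≤ |Real.sin θ| := An_sin_lb θ h1
    _ = |(Complex.exp (Complex.I * θ) - 1).im| := by rw [him]
    _ ≤ ‖Complex.exp (Complex.I * θ) - 1‖ := Complex.abs_im_le_norm _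
    _ = ‖Complex.exp (Complex.I * θ) - 1‖ := rfl

private lemma An_geo_bound (θ : ℝ) (h0 : θ ≠ 0) (h1 : |θ| ≤ 1) (J k : ℕ) :
    ‖∑ j ∈ Ioc J k, (Complex.exp (Complex.I * θ))^j‖ ≤ 4/|θ| := by
  set z := Complex.exp (Complex.I * θ) with hz
  have hth : 0 < |θ| := abs_pos.mpr h0
  have hlb : |θ|/2 ≤ ‖z - 1‖ := An_z_sub_one_lb θ h1
  have hzn : ‖z‖ = 1 := An_exp_norm_one θ
  have hd : (0:ℝ) < ‖z - 1‖ := lt_of_lt_of_le (by linarith) hlb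
  have hz1 : z ≠ 1 := by
    intro h; rw [h] at hd; simp at hd
  have hIoc : Ioc J k = Ico (J+1) (k+1) := by
    ext x; simp only [Finset.mem_Ioc, Finset.mem_Ico]; omega
  rw [hIoc, Finset.sum_Ico_eq_sum_range]
  have hsum : ∑ i ∈ range (k+1-(J+1)), z^(J+1+i)
      = z^(J+1) * ∑ i ∈ range (k+1-(J+1)), z^i := by
    rw [Finset.mul_sum]; exact Finset.sum_congr rfl (fun i _ => pow_add z (J+1) i)
  rw [hsum, geom_sum_eq hz1, norm_mul, norm_pow, hzn, one_pow, one_mul, norm_div]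
  have hnum : ‖z ^ (k+1-(J+1)) - 1‖ ≤ 2 := by
    calc ‖z ^ (k+1-(J+1)) - 1‖ ≤ ‖z ^ (k+1-(J+1))‖ + ‖(1:ℂ)‖ := norm_sub_le _ _
      _ = 1 + 1 := by rw [norm_pow, hzn, one_pow, norm_one]
      _ = 2 := by norm_num
  calc ‖z ^ (k+1-(J+1)) - 1‖ / ‖z - 1‖ ≤ 2 / (|θ|/2) := by
        gcongr
    _ = 4/|θ| := by field_simp; ring

end Aux

/-- bounds on the `θ`-derivative of `A_n(e^{iθ})`, i.e. on
`Σ_{j=1}^n j c_j e^{ijθ}`. -/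
theorem An_derivative_bound (β : ℝ) (hβ : β ∈ Set.Ioo (0 : ℝ) 1) :
    ∃ υ > (0 : ℝ), ∃ C > (0 : ℝ), ∀ n : ℕ, 1 ≤ n →
      (∀ θ : ℝ, 0.01 * (n : ℝ)⁻¹ < |θ| → |θ| < υ →
        ‖∑ j ∈ Finset.Icc 1 n, (j : ℂ) * (ccoef β j : ℂ) *
            Complex.exp (Complex.I * (j : ℂ) * (θ : ℂ))‖ ≤ C * |θ| ^ (β - 1)) ∧
      (∀ θ : ℝ, |θ| ≤ 0.01 * (n : ℝ)⁻¹ →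
        ‖∑ j ∈ Finset.Icc 1 n, (j : ℂ) * (ccoef β j : ℂ) *
            Complex.exp (Complex.I * (j : ℂ) * (θ : ℂ))‖ ≤ C * (n : ℝ) ^ (1 - β)) := by
  obtain ⟨hb0, hb1⟩ := hβ
  have h1b : (0:ℝ) < 1 - β := by linarith
  refine ⟨1, one_pos, 8/(1-β), by positivity, ?_⟩
  intro n hn
  set a : ℕ → ℝ := fun j => β * Pprod β j with ha
  have ha0 : ∀ j, 0 ≤ a j := fun j => mul_nonneg hb0.le (An_Pprod_nonneg β hb1.le j)
  have haj : ∀ j : ℕ, 1 ≤ j → a j ≤ (j:ℝ)^(-β) := by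
    intro j hj
    calc a j ≤ 1 * (j:ℝ)^(-β) :=
          mul_le_mul (by linarith) (An_Pprod_le β hb0 hb1 j hj)
            (An_Pprod_nonneg β hb1.le j) zero_le_one
      _ = (j:ℝ)^(-β) := one_mul _
  -- rewrite the sum
  have hterm : ∀ θ : ℝ, ∀ j : ℕ, 1 ≤ j →
      (j : ℂ) * (ccoef β j : ℂ) * Complex.exp (Complex.I * (j : ℂ) * (θ : ℂ))
      = ((a j : ℝ) : ℂ) * (Complex.exp (Complex.I * θ))^j := by
    intro θ j hj
    have h1 : ((j:ℕ) : ℂ) * (ccoef β j : ℂ) = ((a j : ℝ) : ℂ) := by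
      rw [ha]
      push_cast [← An_jc_eq β j hj]
      ring
    have h2 : Complex.exp (Complex.I * (j : ℂ) * (θ : ℂ))
        = (Complex.exp (Complex.I * θ))^j := by
      rw [← Complex.exp_nat_mul]
      congr 1
      push_cast
      ring
    rw [h1, h2]
  have hrw : ∀ θ : ℝ, ∀ m : ℕ,
      ∑ j ∈ Finset.Icc 1 m, (j : ℂ) * (ccoef β j : ℂ) *
        Complex.exp (Complex.I * (j : ℂ) * (θ : ℂ))
      = ∑ j ∈ Finset.Icc 1 m, ((a j : ℝ) : ℂ) * (Complex.exp (Complex.I * θ))^j := by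
    intro θ m
    exact Finset.sum_congr rfl (fun j hj => hterm θ j (Finset.mem_Icc.mp hj).1)
  -- triangle-inequality bound
  have htri : ∀ θ : ℝ, ∀ m : ℕ,
      ‖∑ j ∈ Finset.Icc 1 m, ((a j : ℝ) : ℂ) * (Complex.exp (Complex.I * θ))^j‖
        ≤ (m:ℝ)^(1-β)/(1-β) := by
    intro θ m
    calc ‖∑ j ∈ Finset.Icc 1 m, ((a j : ℝ) : ℂ) * (Complex.exp (Complex.I * θ))^j‖
        ≤ ∑ j ∈ Finset.Icc 1 m, ‖((a j : ℝ) : ℂ) * (Complex.exp (Complex.I * θ))^j‖ :=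
          norm_sum_le _ _
      _ ≤ ∑ j ∈ Finset.Icc 1 m, (j:ℝ)^(-β) := by
          apply Finset.sum_le_sum
          intro j hj
          rw [norm_mul, norm_pow, An_exp_norm_one, one_pow, mul_one,
            Complex.norm_real, Real.norm_eq_abs, abs_of_nonneg (ha0 j)]
          exact haj j (Finset.mem_Icc.mp hj).1
      _ ≤ (m:ℝ)^(1-β)/(1-β) := An_sum_rpow_le β hb0 hb1 m
  constructor
  · -- oscillatory range
    intro θ hlo hhi
    have hn0 : (0:ℝ) < (n:ℝ) := by exact_mod_cast hn
    have hθ0 : 0 < |θ| := lt_trans (by positivity) hlo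
    have hθne : θ ≠ 0 := fun h => by simp [h] at hθ0
    have hθ1 : |θ| ≤ 1 := hhi.le
    set z := Complex.exp (Complex.I * θ) with hzdef
    set N : ℕ := ⌈1/|θ|⌉₊ with hN
    have hNlb : 1/|θ| ≤ (N:ℝ) := Nat.le_ceil _
    have hNub : (N:ℝ) ≤ 2/|θ| := by
      have h2 : (N:ℝ) < 1/|θ| + 1 := Nat.ceil_lt_add_one (by positivity)
      have h3 : (1:ℝ) ≤ 1/|θ| := by
        rw [le_div_iff₀ hθ0]; linarith
      have : (1:ℝ)/|θ| + 1 ≤ 2/|θ| := by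
        have : 2/|θ| = 1/|θ| + 1/|θ| := by ring
        linarith
      linarith
    have hN1 : 1 ≤ N := Nat.ceil_pos.mpr (by positivity)
    set J := min n N with hJ
    have hJ1 : 1 ≤ J := le_min hn hN1
    have hJn : J ≤ n := min_le_left _ _
    have hJN : J ≤ N := min_le_right _ _
    have hsplit : (∑ j ∈ Finset.Icc 1 n, ((a j : ℝ) : ℂ) * z^j)
        = (∑ j ∈ Finset.Icc 1 J, ((a j : ℝ) : ℂ) * z^j)
          + ∑ j ∈ Ioc J n, ((a j : ℝ) : ℂ) * z^j := by
      have e1 : ∀ m:ℕ, Finset.Icc 1 m = Finset.Ioc 0 m := by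
        intro m; ext x; simp only [Finset.mem_Icc, Finset.mem_Ioc]; omega
      rw [e1 n, e1 J]
      exact (sum_Ioc_consecutive _ (Nat.zero_le J) hJn).symm
    -- head bound
    have hpowθ : (0:ℝ) < |θ|^(β-1) := Real.rpow_pos_of_pos hθ0 _
    have hhead : ‖∑ j ∈ Finset.Icc 1 J, ((a j : ℝ) : ℂ) * z^j‖
        ≤ (2/(1-β)) * |θ|^(β-1) := by
      calc ‖∑ j ∈ Finset.Icc 1 J, ((a j : ℝ) : ℂ) * z^j‖
          ≤ (J:ℝ)^(1-β)/(1-β) := htri θ J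
        _ ≤ (2/|θ|)^(1-β)/(1-β) := by
            have hJle : (J:ℝ) ≤ 2/|θ| := le_trans (by exact_mod_cast hJN) hNub
            gcongr
        _ = 2^(1-β) * |θ|^(β-1) / (1-β) := by
            rw [Real.div_rpow (by norm_num) (abs_nonneg θ),
              show (β-1 : ℝ) = -(1-β) by ring, Real.rpow_neg (abs_nonneg θ),
              div_eq_mul_inv]
            ring
        _ ≤ 2 * |θ|^(β-1) / (1-β) := by
            have h2b : (2:ℝ)^(1-β) ≤ 2 := by
              calc (2:ℝ)^(1-β) ≤ 2^(1:ℝ) :=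
                    Real.rpow_le_rpow_of_exponent_le one_le_two (by linarith)
                _ = 2 := Real.rpow_one 2
            gcongr
        _ = (2/(1-β)) * |θ|^(β-1) := by ring
    -- tail bound
    have htail : ‖∑ j ∈ Ioc J n, ((a j : ℝ) : ℂ) * z^j‖ ≤ 4 * |θ|^(β-1) := by
      rcases le_or_gt n N with hcase | hcase
      · have hempty : Ioc J n = ∅ := by
          have : J = n := min_eq_left hcase
          rw [this, Finset.Ioc_self]
        rw [hempty]
        simp
        positivity
      · have hJeq : J = N := min_eq_right hcase.le
        rw [hJeq]
        have hmono : ∀ j, N+1 ≤ j → a (j+1) ≤ a j := by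
          intro j hj
          exact mul_le_mul_of_nonneg_left
            (An_Pprod_succ_le β hb0 hb1 j (by omega)) hb0.le
        have habel := An_abel_bound a z (4/|θ|) N (by positivity) ha0 hmono
          (fun k => An_geo_bound θ hθne hθ1 N k) n
        have h1' : a (N+1) ≤ ((N+1:ℕ):ℝ)^(-β) := haj (N+1) (by omega)
        have h2' : ((N+1:ℕ):ℝ)^(-β) ≤ |θ|^β := by
          have hb' : 1/|θ| ≤ ((N+1:ℕ):ℝ) := by push_cast; linarith
          have hmon := Real.rpow_le_rpow_of_nonpos (by positivity : (0:ℝ) < 1/|θ|)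
            hb' (by linarith : -β ≤ 0)
          have heq : (1/|θ|)^(-β) = |θ|^β := by
            rw [one_div, Real.inv_rpow (abs_nonneg θ), Real.rpow_neg (abs_nonneg θ),
              inv_inv]
          rw [heq] at hmon
          exact hmon
        have h3' : 4/|θ| * |θ|^β = 4 * |θ|^(β-1) := by
          rw [Real.rpow_sub hθ0, Real.rpow_one]; ring
        calc ‖∑ j ∈ Ioc N n, ((a j : ℝ) : ℂ) * z^j‖
            ≤ 4/|θ| * a (N+1) := habel
          _ ≤ 4/|θ| * |θ|^β :=
              mul_le_mul_of_nonneg_left (le_trans h1' h2') (by positivity)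
          _ = 4 * |θ|^(β-1) := h3'
    -- combine
    rw [hrw θ n, hsplit]
    have hP : (0:ℝ) ≤ |θ|^(β-1) := hpowθ.le
    have h6 : (4:ℝ) ≤ 6/(1-β) := by rw [le_div_iff₀ h1b]; nlinarith
    calc ‖(∑ j ∈ Finset.Icc 1 J, ((a j : ℝ) : ℂ) * z^j)
          + ∑ j ∈ Ioc J n, ((a j : ℝ) : ℂ) * z^j‖
        ≤ ‖∑ j ∈ Finset.Icc 1 J, ((a j : ℝ) : ℂ) * z^j‖
          + ‖∑ j ∈ Ioc J n, ((a j : ℝ) : ℂ) * z^j‖ := norm_add_le _ _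
      _ ≤ (2/(1-β)) * |θ|^(β-1) + 4 * |θ|^(β-1) := add_le_add hhead htail
      _ ≤ (2/(1-β)) * |θ|^(β-1) + (6/(1-β)) * |θ|^(β-1) := by
          linarith [mul_le_mul_of_nonneg_right h6 hP]
      _ = 8/(1-β) * |θ|^(β-1) := by ring
  · -- small θ range
    intro θ hθ
    rw [hrw θ n]
    calc ‖∑ j ∈ Finset.Icc 1 n, ((a j : ℝ) : ℂ) * (Complex.exp (Complex.I * θ))^j‖
        ≤ (n:ℝ)^(1-β)/(1-β) := htri θ n
      _ ≤ 8/(1-β) * (n:ℝ)^(1-β) := by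
          rw [div_eq_mul_inv, mul_comm]
          have h8 : (1-β)⁻¹ ≤ 8/(1-β) := by
            rw [div_eq_mul_inv]
            nlinarith [inv_pos.mpr h1b]
          exact mul_le_mul_of_nonneg_right h8 (Real.rpow_nonneg (Nat.cast_nonneg n) _)
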